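/- For any Hermitian X ∈ ℂ^{n×n} with R_X invertible, one has the alternative expressions T_X = (I + G X̄)^{-1} A (in particular I + G X̄ is invertible) and R(X) = A^H X̄ T_X + H = T_X^H X̄ A + H, where G := B R^{-1} B^H. -/

import Mathlib

open Matrix Filter Topology
open scoped ComplexOrder

noncomputable section

namespace CDARE

variable {n m : ℕ}

/-- Entrywise complex conjugate of a matrix. -/
def mconj {p q : ℕ} (M : Matrix (Fin p) (Fin q) ℂ) : Matrix (Fin p) (Fin q) ℂ :=
  M.map (starRingEnd ℂ)

/-- `hatM M = conj M * M`. -/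
def hatM (M : Matrix (Fin n) (Fin n) ℂ) : Matrix (Fin n) (Fin n) ℂ := mconj M * M

/-- `R_X = R + Bᴴ X̄ B`. -/
def RX (R : Matrix (Fin m) (Fin m) ℂ) (B : Matrix (Fin n) (Fin m) ℂ)
    (X : Matrix (Fin n) (Fin n) ℂ) : Matrix (Fin m) (Fin m) ℂ :=
  R + Bᴴ * mconj X * B

/-- `F_X = R_X⁻¹ Bᴴ X̄ A`. -/
def FX (A : Matrix (Fin n) (Fin n) ℂ) (B : Matrix (Fin n) (Fin m) ℂ)
    (R : Matrix (Fin m) (Fin m) ℂ) (X : Matrix (Fin n) (Fin n) ℂ) :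
    Matrix (Fin m) (Fin n) ℂ :=
  (RX R B X)⁻¹ * (Bᴴ * mconj X * A)

/-- `T_X = A - B F_X`. -/
def TX (A : Matrix (Fin n) (Fin n) ℂ) (B : Matrix (Fin n) (Fin m) ℂ)
    (R : Matrix (Fin m) (Fin m) ℂ) (X : Matrix (Fin n) (Fin n) ℂ) :
    Matrix (Fin n) (Fin n) ℂ :=
  A - B * FX A B R X

/-- The Riccati operator `R(X)`. -/
def Rop (A : Matrix (Fin n) (Fin n) ℂ) (B : Matrix (Fin n) (Fin m) ℂ)
    (R : Matrix (Fin m) (Fin m) ℂ) (H : Matrix (Fin n) (Fin n) ℂ)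
    (X : Matrix (Fin n) (Fin n) ℂ) : Matrix (Fin n) (Fin n) ℂ :=
  Aᴴ * mconj X * A - Aᴴ * mconj X * B * (RX R B X)⁻¹ * (Bᴴ * mconj X * A) + H

/-- `H_X = H + F_Xᴴ R F_X`. -/
def HX (A : Matrix (Fin n) (Fin n) ℂ) (B : Matrix (Fin n) (Fin m) ℂ)
    (R : Matrix (Fin m) (Fin m) ℂ) (H : Matrix (Fin n) (Fin n) ℂ)
    (X : Matrix (Fin n) (Fin n) ℂ) : Matrix (Fin n) (Fin n) ℂ :=
  H + (FX A B R X)ᴴ * R * FX A B R X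

/-- `K(Y, X) = (F_Y - F_X)ᴴ R_X (F_Y - F_X)`. -/
def Kop (A : Matrix (Fin n) (Fin n) ℂ) (B : Matrix (Fin n) (Fin m) ℂ)
    (R : Matrix (Fin m) (Fin m) ℂ) (Y X : Matrix (Fin n) (Fin n) ℂ) :
    Matrix (Fin n) (Fin n) ℂ :=
  (FX A B R Y - FX A B R X)ᴴ * RX R B X * (FX A B R Y - FX A B R X)

/-- Conjugate Stein operator `C_C(X) = X - Cᴴ X̄ C`. -/
def CStein (C X : Matrix (Fin n) (Fin n) ℂ) : Matrix (Fin n) (Fin n) ℂ :=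
  X - Cᴴ * mconj X * C

/-- The set `S_≥`. -/
def Sge (A : Matrix (Fin n) (Fin n) ℂ) (B : Matrix (Fin n) (Fin m) ℂ)
    (R : Matrix (Fin m) (Fin m) ℂ) (H : Matrix (Fin n) (Fin n) ℂ) :
    Set (Matrix (Fin n) (Fin n) ℂ) :=
  {X | X.IsHermitian ∧ ∃ XT : Matrix (Fin n) (Fin n) ℂ, XT.IsHermitian ∧
      IsUnit (RX R B XT) ∧ spectralRadius ℂ (hatM (TX A B R XT)) < 1 ∧
      (CStein (TX A B R XT) X - HX A B R H XT).PosSemidef}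

/-- Alternative expressions: `T_X = (I + G X̄)⁻¹ A` (with `I + G X̄` invertible) and
`R(X) = Aᴴ X̄ T_X + H = T_Xᴴ X̄ A + H`, where `G = B R⁻¹ Bᴴ`. -/
theorem TX_Rop_alternative_expressions
    (n m : ℕ) (A : Matrix (Fin n) (Fin n) ℂ) (B : Matrix (Fin n) (Fin m) ℂ)
    (R : Matrix (Fin m) (Fin m) ℂ) (H : Matrix (Fin n) (Fin n) ℂ)
    (hR : R.IsHermitian) (hRunit : IsUnit R) (hH : H.IsHermitian)
    (X : Matrix (Fin n) (Fin n) ℂ) (hX : X.IsHermitian)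
    (hRX : IsUnit (RX R B X)) :
    IsUnit (1 + B * R⁻¹ * Bᴴ * mconj X) ∧
    TX A B R X = (1 + B * R⁻¹ * Bᴴ * mconj X)⁻¹ * A ∧
    Rop A B R H X = Aᴴ * mconj X * TX A B R X + H ∧
    Rop A B R H X = (TX A B R X)ᴴ * mconj X * A + H := by
  set Xc := mconj X with hXcdef
  set RXm := RX R B X with hRXdef
  have hXc : Xcᴴ = Xc := by
    ext i j
    have h1 : X j i = (starRingEnd ℂ) (X i j) := by
      conv_lhs => rw [← hX]
      simp [Matrix.conjTranspose_apply]
    simp [hXcdef, mconj, Matrix.conjTranspose_apply, Matrix.map_apply, h1]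
  have hR2 : R⁻¹ * R = 1 := Matrix.nonsing_inv_mul R ((Matrix.isUnit_iff_isUnit_det R).mp hRunit)
  have hRX1 : RXm * RXm⁻¹ = 1 :=
    Matrix.mul_nonsing_inv RXm ((Matrix.isUnit_iff_isUnit_det RXm).mp hRX)
  set U := 1 + B * R⁻¹ * Bᴴ * Xc with hUdef
  have hUB : U * B = B * R⁻¹ * RXm := by
    rw [hUdef, Matrix.add_mul, Matrix.one_mul, hRXdef]
    show B + B * R⁻¹ * Bᴴ * Xc * B = B * R⁻¹ * (R + Bᴴ * Xc * B)
    rw [Matrix.mul_add, Matrix.mul_assoc B R⁻¹ R, hR2, Matrix.mul_one]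
    simp only [Matrix.mul_assoc]
  have hTX : TX A B R X = A - B * (RXm⁻¹ * (Bᴴ * Xc * A)) := by
    rw [TX, FX, ← hRXdef, ← hXcdef, Matrix.mul_assoc]
  have hUT : U * TX A B R X = A := by
    rw [hTX, Matrix.mul_sub, ← Matrix.mul_assoc U B, hUB,
      Matrix.mul_assoc (B * R⁻¹) RXm, ← Matrix.mul_assoc RXm, hRX1, Matrix.one_mul,
      hUdef, Matrix.add_mul, Matrix.one_mul]
    simp only [Matrix.mul_assoc]
    exact add_sub_cancel_right A _
  have hUV : U * (1 - B * (RXm⁻¹ * (Bᴴ * Xc))) = 1 := by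
    rw [Matrix.mul_sub, Matrix.mul_one, ← Matrix.mul_assoc U B, hUB,
      Matrix.mul_assoc (B * R⁻¹) RXm, ← Matrix.mul_assoc RXm, hRX1, Matrix.one_mul,
      hUdef]
    simp only [Matrix.mul_assoc]
    exact add_sub_cancel_right 1 _
  have hInv : Invertible U := invertibleOfRightInverse U _ hUV
  have hU : IsUnit U := isUnit_of_invertible U
  have hUinv : U⁻¹ * U = 1 := Matrix.nonsing_inv_mul U ((Matrix.isUnit_iff_isUnit_det U).mp hU)
  have hTXeq : TX A B R X = U⁻¹ * A := by
    calc TX A B R X = 1 * TX A B R X := (Matrix.one_mul _).symm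
      _ = U⁻¹ * U * TX A B R X := by rw [hUinv]
      _ = U⁻¹ * (U * TX A B R X) := by rw [Matrix.mul_assoc]
      _ = U⁻¹ * A := by rw [hUT]
  refine ⟨hU, hTXeq, ?_, ?_⟩
  · rw [Rop, ← hRXdef, ← hXcdef, hTX, Matrix.mul_sub]
    simp only [Matrix.mul_assoc]
  · have hRXH : RXmᴴ = RXm := by
      rw [hRXdef]
      show (R + Bᴴ * Xc * B)ᴴ = R + Bᴴ * Xc * B
      rw [Matrix.conjTranspose_add, Matrix.conjTranspose_mul, Matrix.conjTranspose_mul,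
        hXc, Matrix.conjTranspose_conjTranspose, hR.eq, Matrix.mul_assoc]
    have hRXinvH : (RXm⁻¹)ᴴ = RXm⁻¹ := by
      rw [Matrix.conjTranspose_nonsing_inv, hRXH]
    rw [Rop, ← hRXdef, ← hXcdef, hTX]
    simp only [Matrix.conjTranspose_sub, Matrix.conjTranspose_mul,
      Matrix.conjTranspose_conjTranspose, hXc, hRXinvH, Matrix.sub_mul, Matrix.mul_assoc]

end CDARE
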